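/- Let D be a standard positive braid diagram on n strands whose closure is a knot, and run the roller-coaster algorithm starting at the top-left point with rightward orientation. If A denotes the set of crossings first encountered from above and B the set first encountered from below, then |A| - |B| = n - 1. -/

import Mathlib

/-- One positive crossing `σ_i`: the effect on a strand's position
(positions are numbered `1,…,n` from the top). -/
def stepPos (i p : ℕ) : ℕ := if p = i then i + 1 else if p = i + 1 then i else p

/-- Position at (left side of) time `k` of the strand entering the standard
diagram of the positive braid word `w` at position `j` on the left. -/
def posAt (w : List ℕ) (k j : ℕ) : ℕ := (w.take k).foldl (fun p i => stepPos i p) j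

/-- Starting position of the `t`-th pass through the braid when traversing the
closure starting at the top-left point (position `1`) with rightward
orientation. -/
def strandStart (w : List ℕ) (t : ℕ) : ℕ := (fun j => posAt w w.length j)^[t] 1

/-- Crossing `k` of the standard closed diagram of `w` is first encountered
from above: the pass along the overstrand of crossing `k` (the strand at
position `w.getD k 0`, which crosses over to position `w.getD k 0 + 1`)
occurs on an earlier pass than the pass along the understrand. -/
def firstFromAbove (w : List ℕ) (n k : ℕ) : Prop :=
  ∃ t t' : ℕ, t < n ∧ t' < n ∧
    posAt w k (strandStart w t) = w.getD k 0 ∧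
    posAt w k (strandStart w t') = w.getD k 0 + 1 ∧
    t < t'

section RC

lemma stepPos_invol (i p : ℕ) : stepPos i (stepPos i p) = p := by
  unfold stepPos; split_ifs <;> omega

lemma stepPos_injective (i : ℕ) : Function.Injective (stepPos i) :=
  Function.LeftInverse.injective (stepPos_invol i)

lemma stepPos_lt_iff {i a b : ℕ} (h1 : ¬(a = i ∧ b = i+1)) (h2 : ¬(b = i ∧ a = i+1)) :
    stepPos i a < stepPos i b ↔ a < b := by
  unfold stepPos; split_ifs <;> omega

lemma stepPos_self (i : ℕ) : stepPos i i = i + 1 := by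
  unfold stepPos; split_ifs <;> omega

lemma stepPos_succ_self (i : ℕ) : stepPos i (i+1) = i := by
  unfold stepPos; split_ifs <;> omega

lemma posAt_zero (w : List ℕ) (j : ℕ) : posAt w 0 j = j := rfl

lemma posAt_succ (w : List ℕ) (k j : ℕ) (hk : k < w.length) :
    posAt w (k+1) j = stepPos (w.getD k 0) (posAt w k j) := by
  unfold posAt
  rw [List.take_succ, List.foldl_append]
  rw [List.getElem?_eq_getElem hk]
  simp [List.getD_eq_getElem?_getD, List.getElem?_eq_getElem hk]

lemma foldl_step_injective (l : List ℕ) :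
    Function.Injective (fun j => l.foldl (fun p i => stepPos i p) j) := by
  induction l with
  | nil => intro a b h; simpa using h
  | cons a l ih =>
      intro x y h
      simp only [List.foldl_cons] at h
      exact stepPos_injective a (ih h)

lemma posAt_injective (w : List ℕ) (k : ℕ) : Function.Injective (posAt w k) :=
  fun x y h => foldl_step_injective (w.take k) h

lemma stepPos_mem {n i p : ℕ} (hi : 1 ≤ i ∧ i ≤ n - 1) (hn : 2 ≤ n)
    (hp : 1 ≤ p ∧ p ≤ n) : 1 ≤ stepPos i p ∧ stepPos i p ≤ n := by
  unfold stepPos; split_ifs <;> omega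

lemma foldl_step_mem {n : ℕ} (hn : 2 ≤ n) (l : List ℕ)
    (hl : ∀ i ∈ l, 1 ≤ i ∧ i ≤ n - 1) {j : ℕ} (hj : 1 ≤ j ∧ j ≤ n) :
    1 ≤ l.foldl (fun p i => stepPos i p) j ∧ l.foldl (fun p i => stepPos i p) j ≤ n := by
  induction l generalizing j with
  | nil => simpa using hj
  | cons a l ih =>
      simp only [List.foldl_cons]
      exact ih (fun i hi => hl i (List.mem_cons_of_mem _ hi))
        (stepPos_mem (hl a List.mem_cons_self) hn hj)

lemma posAt_mem {n : ℕ} (hn : 2 ≤ n) {w : List ℕ}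
    (hw : ∀ i ∈ w, 1 ≤ i ∧ i ≤ n - 1) (k : ℕ) {j : ℕ} (hj : 1 ≤ j ∧ j ≤ n) :
    1 ≤ posAt w k j ∧ posAt w k j ≤ n :=
  foldl_step_mem hn (w.take k) (fun i hi => hw i (List.take_subset k w hi)) hj

lemma posAt_image {n : ℕ} (hn : 2 ≤ n) {w : List ℕ}
    (hw : ∀ i ∈ w, 1 ≤ i ∧ i ≤ n - 1) (k : ℕ) :
    (Finset.Icc 1 n).image (posAt w k) = Finset.Icc 1 n := by
  apply Finset.eq_of_subset_of_card_le
  · intro v hv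
    simp only [Finset.mem_image, Finset.mem_Icc] at hv ⊢
    obtain ⟨j, hj, rfl⟩ := hv
    exact posAt_mem hn hw k hj
  · rw [Finset.card_image_of_injective _ (posAt_injective w k)]

variable {n : ℕ} {w : List ℕ}

lemma s_mem (hknot : (Finset.range n).image (strandStart w) = Finset.Icc 1 n)
    {t : ℕ} (ht : t < n) : 1 ≤ strandStart w t ∧ strandStart w t ≤ n := by
  have : strandStart w t ∈ Finset.Icc 1 n := by
    rw [← hknot]; exact Finset.mem_image_of_mem _ (Finset.mem_range.2 ht)
  simpa [Finset.mem_Icc] using this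

lemma s_inj (hn : 2 ≤ n)
    (hknot : (Finset.range n).image (strandStart w) = Finset.Icc 1 n)
    {t t' : ℕ} (ht : t < n) (ht' : t' < n)
    (h : strandStart w t = strandStart w t') : t = t' := by
  have hinj : Set.InjOn (strandStart w) (Finset.range n) := by
    apply Finset.injOn_of_card_image_eq
    rw [hknot, Nat.card_Icc, Finset.card_range]; omega
  exact hinj (by simpa using ht) (by simpa using ht') h

lemma s_zero : strandStart w 0 = 1 := rfl

lemma s_succ (t : ℕ) : strandStart w (t+1) = posAt w w.length (strandStart w t) :=
  Function.iterate_succ_apply' _ t 1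

lemma P_surj (hn : 2 ≤ n) (hw : ∀ i ∈ w, 1 ≤ i ∧ i ≤ n - 1)
    (hknot : (Finset.range n).image (strandStart w) = Finset.Icc 1 n)
    (k : ℕ) {v : ℕ} (h1 : 1 ≤ v) (h2 : v ≤ n) :
    ∃ t, t < n ∧ posAt w k (strandStart w t) = v := by
  have hv : v ∈ Finset.Icc 1 n := Finset.mem_Icc.2 ⟨h1, h2⟩
  rw [← posAt_image hn hw k] at hv
  obtain ⟨j, hj, hjv⟩ := Finset.mem_image.1 hv
  rw [← hknot] at hj
  obtain ⟨t, ht, rfl⟩ := Finset.mem_image.1 hj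
  exact ⟨t, Finset.mem_range.1 ht, hjv⟩

lemma s_n (hn : 2 ≤ n) (hw : ∀ i ∈ w, 1 ≤ i ∧ i ≤ n - 1)
    (hknot : (Finset.range n).image (strandStart w) = Finset.Icc 1 n) :
    strandStart w n = 1 := by
  have h1 : 1 ≤ strandStart w n ∧ strandStart w n ≤ n := by
    have h := posAt_mem hn hw w.length (s_mem hknot (show n - 1 < n by omega))
    rw [← s_succ (n-1), show n - 1 + 1 = n by omega] at h
    exact h
  have h2 : strandStart w n ∈ Finset.Icc 1 n := Finset.mem_Icc.2 h1
  rw [← hknot] at h2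
  obtain ⟨t, ht, hts⟩ := Finset.mem_image.1 h2
  have ht' := Finset.mem_range.1 ht
  rcases Nat.eq_zero_or_pos t with h0 | h0
  · rw [← hts, h0, s_zero]
  · exfalso
    have e1 : strandStart w t = posAt w w.length (strandStart w (t-1)) := by
      rw [← s_succ]; congr 1; omega
    have e2 : strandStart w n = posAt w w.length (strandStart w (n-1)) := by
      rw [← s_succ]; congr 1; omega
    have h3 : strandStart w (t-1) = strandStart w (n-1) :=
      posAt_injective w w.length (by rw [← e1, ← e2, hts])
    have := s_inj hn hknot (show t-1 < n by omega) (show n-1 < n by omega) h3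
    omega

/-- The inversion potential. -/
noncomputable def rcPhi (w : List ℕ) (n k : ℕ) : ℤ :=
  ∑ q ∈ Finset.range n ×ˢ Finset.range n,
    if q.1 < q.2 ∧ posAt w k (strandStart w q.2) < posAt w k (strandStart w q.1)
    then 1 else 0

end RC

section RC2
open scoped Classical
variable {n : ℕ} {w : List ℕ}

lemma rc_step (hn : 2 ≤ n) (hw : ∀ i ∈ w, 1 ≤ i ∧ i ≤ n - 1)
    (hknot : (Finset.range n).image (strandStart w) = Finset.Icc 1 n)
    {k : ℕ} (hk : k < w.length) :
    rcPhi w n (k+1) = rcPhi w n k + (if firstFromAbove w n k then 1 else -1) := by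
  classical
  set i := w.getD k 0 with hi
  have hiw : 1 ≤ i ∧ i ≤ n - 1 := by
    apply hw
    have h : w.getD k 0 = w[k] := by
      simp [List.getD_eq_getElem?_getD, List.getElem?_eq_getElem hk]
    rw [hi, h]
    exact List.getElem_mem hk
  obtain ⟨t₀, ht₀, hPt₀⟩ := P_surj hn hw hknot k (show 1 ≤ i by omega) (show i ≤ n by omega)
  obtain ⟨t₁, ht₁, hPt₁⟩ := P_surj hn hw hknot k (show 1 ≤ i+1 by omega) (show i+1 ≤ n by omega)
  have hne : t₀ ≠ t₁ := by
    intro h; rw [h, hPt₁] at hPt₀; omega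
  have hPinj : ∀ t, t < n → ∀ t', t' < n →
      posAt w k (strandStart w t) = posAt w k (strandStart w t') → t = t' :=
    fun t ht t' ht' h => s_inj hn hknot ht ht' (posAt_injective w k h)
  have hFFA : firstFromAbove w n k ↔ t₀ < t₁ := by
    constructor
    · rintro ⟨t, t', ht, ht', h1, h2, hlt⟩
      have e0 : t = t₀ := hPinj t ht t₀ ht₀ (by rw [hPt₀, ← hi] at *; rw [h1])
      have e1 : t' = t₁ := hPinj t' ht' t₁ ht₁ (by rw [hPt₁, ← hi] at *; rw [h2])
      omega
    · intro h
      exact ⟨t₀, t₁, ht₀, ht₁, by rw [← hi]; exact hPt₀, by rw [← hi]; exact hPt₁, h⟩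
  have hPk1 : ∀ t, posAt w (k+1) (strandStart w t) = stepPos i (posAt w k (strandStart w t)) :=
    fun t => by rw [posAt_succ w k _ hk, hi]
  have hsum : rcPhi w n (k+1) - rcPhi w n k = (if firstFromAbove w n k then 1 else -1) := by
    unfold rcPhi
    rw [← Finset.sum_sub_distrib]
    set p : ℕ × ℕ := if t₀ < t₁ then (t₀, t₁) else (t₁, t₀) with hp
    rw [Finset.sum_eq_single p]
    · -- value at p
      rcases Nat.lt_or_ge t₀ t₁ with hlt | hge
      · have hpp : p = (t₀, t₁) := by rw [hp, if_pos hlt]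
        rw [hpp]
        simp only [hPk1, hPt₀, hPt₁, stepPos_self, stepPos_succ_self, hFFA]
        split_ifs <;> omega
      · have hlt : t₁ < t₀ := by omega
        have hpp : p = (t₁, t₀) := by rw [hp, if_neg (by omega)]
        rw [hpp]
        simp only [hPk1, hPt₀, hPt₁, stepPos_self, stepPos_succ_self, hFFA]
        split_ifs <;> omega
    · -- other pairs unchanged
      rintro ⟨t, t'⟩ hq hqp
      simp only [Finset.mem_product, Finset.mem_range] at hq
      by_cases htt : t < t'
      · have hnot1 : ¬(posAt w k (strandStart w t) = i ∧ posAt w k (strandStart w t') = i+1) := by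
          rintro ⟨e1, e2⟩
          have e1' : t = t₀ := hPinj t hq.1 t₀ ht₀ (by rw [e1, hPt₀])
          have e2' : t' = t₁ := hPinj t' hq.2 t₁ ht₁ (by rw [e2, hPt₁])
          apply hqp
          rw [hp, if_pos (show t₀ < t₁ by omega)]
          rw [e1', e2']
        have hnot2 : ¬(posAt w k (strandStart w t') = i ∧ posAt w k (strandStart w t) = i+1) := by
          rintro ⟨e1, e2⟩
          have e1' : t' = t₀ := hPinj t' hq.2 t₀ ht₀ (by rw [e1, hPt₀])
          have e2' : t = t₁ := hPinj t hq.1 t₁ ht₁ (by rw [e2, hPt₁])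
          apply hqp
          rw [hp, if_neg (show ¬ t₀ < t₁ by omega)]
          rw [e1', e2']
        simp only [hPk1]
        have hiff : stepPos i (posAt w k (strandStart w t')) < stepPos i (posAt w k (strandStart w t))
            ↔ posAt w k (strandStart w t') < posAt w k (strandStart w t) :=
          stepPos_lt_iff hnot2 hnot1
        simp only [hiff]
        simp
      · simp [htt]
    · -- p is in the product
      intro hps
      exfalso; apply hps
      rw [hp]
      split_ifs <;> simp only [Finset.mem_product, Finset.mem_range] <;> omega
  omega

end RC2

section RC3
open scoped Classical
variable {n : ℕ} {w : List ℕ}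

lemma rc_tele (hn : 2 ≤ n) (hw : ∀ i ∈ w, 1 ≤ i ∧ i ≤ n - 1)
    (hknot : (Finset.range n).image (strandStart w) = Finset.Icc 1 n) :
    ∀ m, m ≤ w.length →
      rcPhi w n m + (((Finset.range m).filter (fun k => ¬ firstFromAbove w n k)).card : ℤ)
        = rcPhi w n 0 + (((Finset.range m).filter (fun k => firstFromAbove w n k)).card : ℤ) := by
  intro m
  induction m with
  | zero => intro _; simp
  | succ m ih =>
    intro hm
    have hmL : m < w.length := hm
    have ihm := ih (Nat.le_of_lt hmL)
    have hst := rc_step hn hw hknot hmL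
    rw [Finset.range_add_one, Finset.filter_insert, Finset.filter_insert]
    by_cases hf : firstFromAbove w n m
    · rw [if_neg (by simpa using hf), if_pos hf,
        Finset.card_insert_of_notMem (by simp)]
      rw [if_pos hf] at hst
      push_cast
      omega
    · rw [if_pos hf, if_neg hf,
        Finset.card_insert_of_notMem (by simp)]
      rw [if_neg hf] at hst
      push_cast
      omega

lemma rc_end (hn : 2 ≤ n) (hw : ∀ i ∈ w, 1 ≤ i ∧ i ≤ n - 1)
    (hknot : (Finset.range n).image (strandStart w) = Finset.Icc 1 n) :
    rcPhi w n w.length = rcPhi w n 0 + ((n : ℤ) - 1) := by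
  have hIcc : Finset.Icc 1 n = insert n (Finset.Icc 1 (n-1)) := by
    ext x; simp only [Finset.mem_Icc, Finset.mem_insert]; omega
  have hrange : Finset.range n = insert 0 (Finset.Icc 1 (n-1)) := by
    ext x; simp only [Finset.mem_range, Finset.mem_insert, Finset.mem_Icc]; omega
  have h0not : (0:ℕ) ∉ Finset.Icc 1 (n-1) := by simp
  have hnnot : n ∉ Finset.Icc 1 (n-1) := by
    simp only [Finset.mem_Icc]; omega
  have himg : Finset.Icc 1 n = (Finset.range n).image (· + 1) := by
    ext x
    simp only [Finset.mem_Icc, Finset.mem_image, Finset.mem_range]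
    constructor
    · intro h; exact ⟨x - 1, by omega, by omega⟩
    · rintro ⟨a, ha, rfl⟩; omega
  have hinj : ∀ x ∈ Finset.range n, ∀ y ∈ Finset.range n, x + 1 = y + 1 → x = y :=
    fun a _ b _ h => by omega
  have hsnn := s_n hn hw hknot
  have hs1 : ∀ u, 1 ≤ u → u ≤ n - 1 → 1 < strandStart w u := by
    intro u h1 h2
    have hm := s_mem hknot (show u < n by omega)
    rcases Nat.lt_or_ge 1 (strandStart w u) with h | h
    · exact h
    · exfalso
      have he : strandStart w u = strandStart w 0 := by rw [s_zero]; omega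
      have := s_inj hn hknot (show u < n by omega) (show 0 < n by omega) he
      omega
  have eL : rcPhi w n w.length
      = ∑ u ∈ Finset.range n, ∑ v ∈ Finset.range n,
          (if u < v ∧ strandStart w (v+1) < strandStart w (u+1) then (1:ℤ) else 0) := by
    unfold rcPhi
    rw [Finset.sum_product]
    apply Finset.sum_congr rfl; intro u _
    apply Finset.sum_congr rfl; intro v _
    rw [← s_succ, ← s_succ]
  have e0 : rcPhi w n 0
      = ∑ u ∈ Finset.range n, ∑ v ∈ Finset.range n,
          (if u < v ∧ strandStart w v < strandStart w u then (1:ℤ) else 0) := by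
    unfold rcPhi
    rw [Finset.sum_product]
    simp only [posAt_zero]
    rfl
  have eshift : (∑ u ∈ Finset.Icc 1 n, ∑ v ∈ Finset.Icc 1 n,
        (if u < v ∧ strandStart w v < strandStart w u then (1:ℤ) else 0))
      = ∑ u ∈ Finset.range n, ∑ v ∈ Finset.range n,
          (if u < v ∧ strandStart w (v+1) < strandStart w (u+1) then (1:ℤ) else 0) := by
    conv_lhs => rw [himg]
    rw [Finset.sum_image hinj]
    apply Finset.sum_congr rfl; intro u _
    rw [Finset.sum_image hinj]
    apply Finset.sum_congr rfl; intro v _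
    simp only [add_lt_add_iff_right]
  have hT : (∑ u ∈ Finset.Icc 1 n, ∑ v ∈ Finset.Icc 1 n,
        (if u < v ∧ strandStart w v < strandStart w u then (1:ℤ) else 0))
      = ((n:ℤ) - 1) + ∑ u ∈ Finset.Icc 1 (n-1), ∑ v ∈ Finset.Icc 1 (n-1),
          (if u < v ∧ strandStart w v < strandStart w u then (1:ℤ) else 0) := by
    conv_lhs => rw [hIcc]
    rw [Finset.sum_insert hnnot]
    have hzero : (∑ v ∈ insert n (Finset.Icc 1 (n-1)),
        (if n < v ∧ strandStart w v < strandStart w n then (1:ℤ) else 0)) = 0 := by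
      apply Finset.sum_eq_zero
      intro v hv
      simp only [Finset.mem_insert, Finset.mem_Icc] at hv
      have hne : ¬(n < v ∧ strandStart w v < strandStart w n) := by
        rintro ⟨h1, _⟩; omega
      rw [if_neg hne]
    rw [hzero, zero_add]
    have hsplit : ∀ u ∈ Finset.Icc 1 (n-1),
        (∑ v ∈ insert n (Finset.Icc 1 (n-1)),
          (if u < v ∧ strandStart w v < strandStart w u then (1:ℤ) else 0))
        = 1 + ∑ v ∈ Finset.Icc 1 (n-1),
          (if u < v ∧ strandStart w v < strandStart w u then (1:ℤ) else 0) := by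
      intro u hu
      simp only [Finset.mem_Icc] at hu
      rw [Finset.sum_insert hnnot, if_pos]
      exact ⟨by omega, by rw [hsnn]; exact hs1 u hu.1 hu.2⟩
    rw [Finset.sum_congr rfl hsplit, Finset.sum_add_distrib, Finset.sum_const]
    simp only [Nat.card_Icc, nsmul_eq_mul, mul_one]
    have : ((n - 1 + 1 - 1 : ℕ) : ℤ) = (n : ℤ) - 1 := by omega
    rw [this]
  have hT0 : (∑ u ∈ Finset.range n, ∑ v ∈ Finset.range n,
        (if u < v ∧ strandStart w v < strandStart w u then (1:ℤ) else 0))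
      = ∑ u ∈ Finset.Icc 1 (n-1), ∑ v ∈ Finset.Icc 1 (n-1),
          (if u < v ∧ strandStart w v < strandStart w u then (1:ℤ) else 0) := by
    conv_lhs => rw [hrange]
    rw [Finset.sum_insert h0not]
    have hzero : (∑ v ∈ insert 0 (Finset.Icc 1 (n-1)),
        (if 0 < v ∧ strandStart w v < strandStart w 0 then (1:ℤ) else 0)) = 0 := by
      apply Finset.sum_eq_zero
      intro v hv
      simp only [Finset.mem_insert, Finset.mem_Icc] at hv
      have hnv : v < n := by omega
      have hge := (s_mem hknot hnv).1
      have hne : ¬(0 < v ∧ strandStart w v < strandStart w 0) := by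
        rw [s_zero]; rintro ⟨_, h2⟩; omega
      rw [if_neg hne]
    rw [hzero, zero_add]
    apply Finset.sum_congr rfl
    intro u hu
    rw [Finset.sum_insert h0not]
    have hne : ¬(u < 0 ∧ strandStart w 0 < strandStart w u) := by
      rintro ⟨h1, _⟩; omega
    rw [if_neg hne, zero_add]
  rw [eL, ← eshift, hT, e0, hT0]
  ring

end RC3


/-- Lemma 2.1: for a standard positive braid diagram on `n` strands whose
closure is a knot, running the roller-coaster algorithm from the top-left
point, the number of crossings first encountered from above exceeds the
number first encountered from below by `n - 1`. -/
theorem positive_braid_above_minus_below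
    (n : ℕ) (hn : 2 ≤ n) (w : List ℕ)
    (hw : ∀ i ∈ w, 1 ≤ i ∧ i ≤ n - 1)
    (hknot : (Finset.range n).image (strandStart w) = Finset.Icc 1 n) :
    {k | k < w.length ∧ firstFromAbove w n k}.ncard
      = {k | k < w.length ∧ ¬ firstFromAbove w n k}.ncard + (n - 1) := by
  classical
  have tele := rc_tele hn hw hknot w.length le_rfl
  have hend := rc_end hn hw hknot
  have hA : {k | k < w.length ∧ firstFromAbove w n k}.ncard
      = ((Finset.range w.length).filter (fun k => firstFromAbove w n k)).card := by
    rw [← Set.ncard_coe_finset]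
    congr 1
    ext k
    simp [Finset.mem_filter, Finset.mem_range]
  have hB : {k | k < w.length ∧ ¬ firstFromAbove w n k}.ncard
      = ((Finset.range w.length).filter (fun k => ¬ firstFromAbove w n k)).card := by
    rw [← Set.ncard_coe_finset]
    congr 1
    ext k
    simp [Finset.mem_filter, Finset.mem_range]
  rw [hA, hB]
  omega
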